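/- Fix k ∈ ℂ. For t ∈ ℂ∖{0}, let M(t) be the 3×3 complex matrix with rows (t, 0, 0), (k(t-1), 1, 0), (k²(t-1)²/t, 2k(t-1)/t, 1/t). Then: (1) M(t) ∈ SL(3,ℂ) for every t ≠ 0, and M(t₁)·M(t₂) = M(t₁·t₂) for all t₁, t₂ ≠ 0, so that {M(t) : t ∈ ℂ∖{0}} is a subgroup of SL(3,ℂ); (2) every M(t) maps the set C = {(x:y:z) ∈ ℙ²(ℂ) : x²·z = x·y²} onto itself; and (3) every M(t) fixes each of the three points (0:0:1), (0:1:2k), and (1:k:k²) of ℙ²(ℂ). -/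

import Mathlib

open Matrix

noncomputable section

/-- The special linear group `SL(3, ℂ)`. -/
abbrev SL3 := Matrix.SpecialLinearGroup (Fin 3) ℂ

/-- The complex projective plane `ℙ²(ℂ)`. -/
abbrev P2 := Projectivization ℂ (Fin 3 → ℂ)

/-- The action of `SL(3, ℂ)` on `ℙ²(ℂ)` induced by the linear action on `ℂ³`. -/
noncomputable def act (g : SL3) (p : P2) : P2 :=
  Projectivization.map (Matrix.SpecialLinearGroup.toLin' g).toLinearMap
    (Matrix.SpecialLinearGroup.toLin' g).injective p
/-- The matrix `M(t)` with rows `(t,0,0)`, `(k(t-1),1,0)`,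
`(k²(t-1)²/t, 2k(t-1)/t, 1/t)`. -/
def Mfam (k t : ℂ) : Matrix (Fin 3) (Fin 3) ℂ :=
  !![t, 0, 0;
     k * (t - 1), 1, 0;
     k ^ 2 * (t - 1) ^ 2 / t, 2 * k * (t - 1) / t, 1 / t]

/-- The union of a smooth conic and a tangent line, `{x²·z = x·y²}`. -/
def Ctan : Set P2 := {p : P2 | p.rep 0 ^ 2 * p.rep 2 = p.rep 0 * p.rep 1 ^ 2}

/-- The tacnodal point `(0:0:1)`. -/
def q₁ : P2 := Projectivization.mk ℂ ![0, 0, 1] (by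
  intro h; simpa using congrFun h 2)

/-- The point `(0:1:2k)`. -/
def q₂ (k : ℂ) : P2 := Projectivization.mk ℂ ![0, 1, 2 * k] (by
  intro h; simpa using congrFun h 1)

/-- The point `(1:k:k²)`. -/
def q₃ (k : ℂ) : P2 := Projectivization.mk ℂ ![1, k, k ^ 2] (by
  intro h; simpa using congrFun h 0)

set_option linter.unnecessarySeqFocus false

lemma Mfam_det (k t : ℂ) (ht : t ≠ 0) : (Mfam k t).det = 1 := by
  simp [Mfam, Matrix.det_fin_three]
  field_simp

lemma act_mk (g : SL3) (v : Fin 3 → ℂ) (hv : v ≠ 0) :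
    act g (Projectivization.mk ℂ v hv) =
    Projectivization.mk ℂ ((g : Matrix (Fin 3) (Fin 3) ℂ).mulVec v)
      (by
        intro h
        apply hv
        have := (Matrix.SpecialLinearGroup.toLin' g).injective (a₁ := v) (a₂ := 0)
        simp only [map_zero] at this
        apply this
        rw [Matrix.SpecialLinearGroup.toLin'_apply, Matrix.toLin'_apply, h]) := by
  rw [act, Projectivization.map_mk]
  congr 1

lemma mulVec_Mfam (k t : ℂ) (v : Fin 3 → ℂ) :
    (Mfam k t).mulVec v = ![t * v 0, k * (t - 1) * v 0 + v 1,
      k ^ 2 * (t - 1) ^ 2 / t * v 0 + 2 * k * (t - 1) / t * v 1 + 1 / t * v 2] := by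
  funext i
  fin_cases i <;>
    simp [Mfam, Matrix.mulVec, dotProduct, Fin.sum_univ_three]

lemma mem_Ctan_iff (v : Fin 3 → ℂ) (hv : v ≠ 0) :
    Projectivization.mk ℂ v hv ∈ Ctan ↔ v 0 ^ 2 * v 2 = v 0 * v 1 ^ 2 := by
  obtain ⟨a, ha⟩ := Projectivization.exists_smul_eq_mk_rep ℂ v hv
  have h0 : (Projectivization.mk ℂ v hv).rep 0 = a * v 0 := by rw [← ha]; simp [Units.smul_def]
  have h1 : (Projectivization.mk ℂ v hv).rep 1 = a * v 1 := by rw [← ha]; simp [Units.smul_def]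
  have h2 : (Projectivization.mk ℂ v hv).rep 2 = a * v 2 := by rw [← ha]; simp [Units.smul_def]
  simp only [Ctan, Set.mem_setOf_eq, h0, h1, h2]
  rw [show ((a : ℂ) * v 0) ^ 2 * (a * v 2) = a ^ 3 * (v 0 ^ 2 * v 2) by ring,
    show ((a : ℂ) * v 0) * (a * v 1) ^ 2 = a ^ 3 * (v 0 * v 1 ^ 2) by ring,
    mul_right_inj' (pow_ne_zero 3 a.ne_zero)]

lemma Mfam_mul (k : ℂ) (t₁ t₂ : ℂ) (h₁ : t₁ ≠ 0) (h₂ : t₂ ≠ 0) :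
    Mfam k t₁ * Mfam k t₂ = Mfam k (t₁ * t₂) := by
  ext i j
  fin_cases i <;> fin_cases j <;>
    simp [Mfam, Matrix.mul_apply, Fin.sum_univ_three] <;>
    (try field_simp) <;> (try ring)

lemma Mfam_one (k : ℂ) : Mfam k 1 = 1 := by
  rw [show (1 : Matrix (Fin 3) (Fin 3) ℂ) = !![1,0,0;0,1,0;0,0,1] from Matrix.one_fin_three]
  simp [Mfam]

lemma key (k s : ℂ) (hs : s ≠ 0) (g : SL3)
    (hg : (g : Matrix (Fin 3) (Fin 3) ℂ) = Mfam k s) :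
    ∀ p ∈ Ctan, act g p ∈ Ctan := by
  intro p hp
  induction p using Projectivization.ind with
  | h v hv =>
    rw [mem_Ctan_iff] at hp
    rw [act_mk, mem_Ctan_iff]
    simp only [hg, mulVec_Mfam, Matrix.cons_val_zero, Matrix.cons_val_one, Matrix.head_cons,
      Matrix.cons_val_two, Matrix.tail_cons]
    field_simp
    linear_combination hp


/-- The one-parameter family `M(t)` from the proof of Lemma 2.13: each `M(t)` lies in
`SL(3,ℂ)`, the family is a subgroup (`M(t₁)·M(t₂) = M(t₁t₂)`), each `M(t)` maps the
conic-plus-tangent-line cubic `{x²·z = x·y²}` onto itself, and each `M(t)` fixes the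
points `(0:0:1)`, `(0:1:2k)` and `(1:k:k²)`. -/
theorem one_parameter_family_conic_tangent (k : ℂ) :
    (∀ t : ℂ, t ≠ 0 → ∃ g : SL3, (g : Matrix (Fin 3) (Fin 3) ℂ) = Mfam k t) ∧
    (∀ t₁ t₂ : ℂ, t₁ ≠ 0 → t₂ ≠ 0 → Mfam k t₁ * Mfam k t₂ = Mfam k (t₁ * t₂)) ∧
    (∀ t : ℂ, t ≠ 0 → ∀ g : SL3, (g : Matrix (Fin 3) (Fin 3) ℂ) = Mfam k t →
      act g '' Ctan = Ctan ∧
      act g q₁ = q₁ ∧ act g (q₂ k) = q₂ k ∧ act g (q₃ k) = q₃ k) := by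
  refine ⟨fun t ht => ⟨⟨Mfam k t, Mfam_det k t ht⟩, rfl⟩, Mfam_mul k, ?_⟩
  intro t ht g hg
  have ht' : t⁻¹ ≠ 0 := inv_ne_zero ht
  refine ⟨?_, ?_, ?_, ?_⟩
  · apply Set.Subset.antisymm
    · rintro _ ⟨p, hp, rfl⟩
      exact key k t ht g hg p hp
    · intro p hp
      set g' : SL3 := ⟨Mfam k t⁻¹, Mfam_det k t⁻¹ ht'⟩ with hg'
      refine ⟨act g' p, key k t⁻¹ ht' g' rfl p hp, ?_⟩
      induction p using Projectivization.ind with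
      | h v hv =>
        have hvv : (g : Matrix (Fin 3) (Fin 3) ℂ).mulVec
            ((Mfam k t⁻¹).mulVec v) = v := by
          rw [hg, Matrix.mulVec_mulVec, Mfam_mul k t t⁻¹ ht ht',
            mul_inv_cancel₀ ht, Mfam_one, Matrix.one_mulVec]
        rw [act_mk, act_mk, Projectivization.mk_eq_mk_iff']
        exact ⟨1, by rw [one_smul]; exact hvv.symm⟩
  · rw [q₁, act_mk, Projectivization.mk_eq_mk_iff']
    refine ⟨1/t, funext fun i => ?_⟩
    fin_cases i <;> simp [hg, mulVec_Mfam]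
  · rw [q₂, act_mk, Projectivization.mk_eq_mk_iff']
    refine ⟨1, funext fun i => ?_⟩
    fin_cases i <;> simp [hg, mulVec_Mfam] <;> (try field_simp) <;> (try ring)
  · rw [q₃, act_mk, Projectivization.mk_eq_mk_iff']
    refine ⟨t, funext fun i => ?_⟩
    fin_cases i <;> simp [hg, mulVec_Mfam] <;> (try field_simp) <;> (try ring)
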